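/- Assume the set K of Kronecker numbers is a Δ_721*-set, and suppose D = {d_1, ..., d_720} is a set of positive integers and k a positive integer such that for every j with 1 ≤ j ≤ 720, j·d_j = k. Then for every positive integer b, k·b ∈ D·K = {d·x : d ∈ D, x ∈ K}. -/
import Mathlib


def KroneckerSet : Set ℕ :=
  {n | 0 < n ∧ Even n ∧
    {pq : ℕ × ℕ | pq.1.Prime ∧ pq.2.Prime ∧ pq.1 - pq.2 = n}.Infinite}

theorem product_representation (hK : ∀ S : Finset ℕ, 721 ≤ S.card →
      ∃ d ∈ KroneckerSet, ∃ x ∈ S, ∃ y ∈ S, y < x ∧ d = x - y)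
    (d : ℕ → ℕ) (k : ℕ) (hk : 0 < k) (hd : ∀ j ∈ Finset.Icc 1 720, 0 < d j)
    (hjd : ∀ j ∈ Finset.Icc 1 720, j * d j = k) :
    ∀ b : ℕ, 0 < b → ∃ j ∈ Finset.Icc 1 720, ∃ x ∈ KroneckerSet, k * b = d j * x := by
  intro b hb
  set S : Finset ℕ := (Finset.range 721).image (fun i => i * b) with hS
  have hcard : 721 ≤ S.card := by
    rw [hS, Finset.card_image_of_injective _ (fun i i' h => by
      exact Nat.eq_of_mul_eq_mul_right hb h)]
    simp
  obtain ⟨c, hcK, x, hx, y, hy, hyx, hc⟩ := hK S hcard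
  simp only [hS, Finset.mem_image, Finset.mem_range] at hx hy
  obtain ⟨i, hi, rfl⟩ := hx
  obtain ⟨i', hi', rfl⟩ := hy
  have hii' : i' < i := by
    by_contra h
    exact absurd (Nat.mul_le_mul_right b (Nat.le_of_not_lt h)) (Nat.not_le.2 hyx)
  set j := i - i' with hj
  have hjmem : j ∈ Finset.Icc 1 720 := by
    rw [Finset.mem_Icc]
    omega
  refine ⟨j, hjmem, c, hcK, ?_⟩
  have hcb : c = j * b := by
    rw [hc, hj, Nat.sub_mul]
  rw [hcb, ← Nat.mul_assoc, Nat.mul_comm (d j) j, hjd j hjmem]
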